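/- If σ_1, ..., σ_N are independent and identically distributed geometric random variables (with values in {1,2,...} and success probability p), then the random variable N·(min(σ_1,...,σ_N) − 1) + min{ n ∈ {1,...,N} : σ_n = min(σ_1,...,σ_N) } has the same law as σ_1. -/

import Mathlib

open MeasureTheory ProbabilityTheory

private lemma geom_tail {Ω : Type*} [MeasurableSpace Ω] (P : Measure Ω)
    (p : ℝ) (hp0 : 0 < p) (hp1 : p ≤ 1) (f : Ω → ℕ)
    (hm : Measurable f)
    (hg : ∀ k : ℕ, 1 ≤ k → P {ω | f ω = k} = ENNReal.ofReal (p * (1 - p) ^ (k - 1))) :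
    ∀ m : ℕ, 1 ≤ m → P {ω | m ≤ f ω} = ENNReal.ofReal ((1 - p) ^ (m - 1)) := by
  intro m hm1
  set q : ℝ := 1 - p with hq
  have hq0 : 0 ≤ q := by rw [hq]; linarith
  have hq1 : q < 1 := by rw [hq]; linarith
  have hset : {ω | m ≤ f ω} = ⋃ k : ℕ, {ω | f ω = m + k} := by
    ext ω
    simp only [Set.mem_setOf_eq, Set.mem_iUnion]
    constructor
    · intro h; exact ⟨f ω - m, by omega⟩
    · rintro ⟨k, hk⟩; omega
  have hdisj : Pairwise (Function.onFun Disjoint fun k : ℕ => {ω | f ω = m + k}) := by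
    intro a b hab
    simp only [Function.onFun, Set.disjoint_left, Set.mem_setOf_eq]
    intro ω h1 h2
    exact hab (by omega)
  have hms : ∀ k : ℕ, MeasurableSet {ω | f ω = m + k} := fun k =>
    hm (measurableSet_singleton (m + k))
  rw [hset, measure_iUnion hdisj hms]
  have hterm : ∀ k : ℕ, P {ω | f ω = m + k}
      = ENNReal.ofReal ((p * q ^ (m - 1)) * q ^ k) := by
    intro k
    rw [hg (m + k) (by omega)]
    congr 1
    rw [mul_assoc, ← pow_add]
    congr 2
    omega
  simp_rw [hterm]
  rw [← ENNReal.ofReal_tsum_of_nonneg (fun k => by positivity)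
    ((summable_geometric_of_lt_one hq0 hq1).mul_left _)]
  rw [tsum_mul_left, tsum_geometric_of_lt_one hq0 hq1]
  congr 1
  have h1q : 1 - q = p := by rw [hq]; ring
  rw [h1q, mul_comm p, mul_assoc, mul_inv_cancel₀ hp0.ne', mul_one]

/-- If `σ 0, ..., σ (N-1)` are i.i.d. geometric random variables with values in `{1, 2, ...}`
and success probability `p`, then `N * (min σ - 1) + (least index achieving the min, counted
from 1)` has the same law as `σ 0`. -/
theorem parallel_replica_geometric
    {Ω : Type*} [MeasurableSpace Ω] (P : Measure Ω) [IsProbabilityMeasure P]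
    (N : ℕ) [NeZero N] (p : ℝ) (hp0 : 0 < p) (hp1 : p ≤ 1) (σ : Fin N → Ω → ℕ)
    (hmeas : ∀ i, Measurable (σ i))
    (hpos : ∀ i ω, 1 ≤ σ i ω)
    (hindep : iIndepFun σ P)
    (hgeom : ∀ i, ∀ k : ℕ, 1 ≤ k →
      P {ω | σ i ω = k} = ENNReal.ofReal (p * (1 - p) ^ (k - 1))) :
    ∀ k : ℕ,
      P {ω |
          (N * ((Finset.univ.inf' Finset.univ_nonempty fun i => σ i ω) - 1)
            + (1 + sInf {n : ℕ | ∃ h : n < N, σ ⟨n, h⟩ ω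
                = Finset.univ.inf' Finset.univ_nonempty fun i => σ i ω})) = k}
        = P {ω | σ 0 ω = k} := by
  intro k
  have hN : 0 < N := Nat.pos_of_ne_zero (NeZero.ne N)
  by_cases hk0 : k = 0
  · subst hk0
    have h1 : {ω : Ω |
        (N * ((Finset.univ.inf' Finset.univ_nonempty fun i => σ i ω) - 1)
          + (1 + sInf {n : ℕ | ∃ h : n < N, σ ⟨n, h⟩ ω
              = Finset.univ.inf' Finset.univ_nonempty fun i => σ i ω})) = 0} = ∅ := by
      ext ω
      simp only [Set.mem_setOf_eq, Set.mem_empty_iff_false, iff_false]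
      omega
    have h2 : {ω : Ω | σ 0 ω = 0} = ∅ := by
      ext ω
      simp only [Set.mem_setOf_eq, Set.mem_empty_iff_false, iff_false]
      have := hpos 0 ω; omega
    rw [h1, h2]
  · have hk1 : 1 ≤ k := Nat.one_le_iff_ne_zero.mpr hk0
    set q : ℝ := 1 - p with hq
    have hq0 : 0 ≤ q := by rw [hq]; linarith
    set m : ℕ := (k - 1) / N + 1 with hmdef
    set j : ℕ := (k - 1) % N with hjdef
    have hjN : j < N := Nat.mod_lt _ hN
    have hm1 : 1 ≤ m := Nat.le_add_left 1 _
    have hkey : N * (m - 1) + j = k - 1 := by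
      have h1 : m - 1 = (k - 1) / N := by rw [hmdef, Nat.add_sub_cancel]
      rw [h1, hjdef, Nat.div_add_mod]
    have hk' : N * (m - 1) + (1 + j) = k := by
      generalize N * (m - 1) = c at hkey ⊢
      omega
    set A : Fin N → Set ℕ := fun i =>
      if (i : ℕ) < j then Set.Ioi m else if (i : ℕ) = j then {m} else Set.Ici m with hA
    have hsetEq : {ω : Ω |
        (N * ((Finset.univ.inf' Finset.univ_nonempty fun i => σ i ω) - 1)
          + (1 + sInf {n : ℕ | ∃ h : n < N, σ ⟨n, h⟩ ω
              = Finset.univ.inf' Finset.univ_nonempty fun i => σ i ω})) = k}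
        = ⋂ i : Fin N, σ i ⁻¹' (A i) := by
      ext ω
      simp only [Set.mem_setOf_eq, Set.mem_iInter, Set.mem_preimage]
      obtain ⟨i0, -, hi0⟩ :=
        Finset.exists_mem_eq_inf' (Finset.univ_nonempty (α := Fin N)) fun i => σ i ω
      set M := (Finset.univ.inf' Finset.univ_nonempty fun i => σ i ω) with hMdef
      set S := {n : ℕ | ∃ h : n < N, σ ⟨n, h⟩ ω = M} with hSdef
      have hM1 : 1 ≤ M := hi0 ▸ hpos i0 ω
      have hi0S : (i0 : ℕ) ∈ S := ⟨i0.isLt, by rw [Fin.eta]; exact hi0.symm⟩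
      have hSne : S.Nonempty := ⟨_, hi0S⟩
      constructor
      · intro h
        obtain ⟨hJN, hJval⟩ := Nat.sInf_mem hSne
        have huniq : (k - 1) / N = M - 1 ∧ (k - 1) % N = sInf S :=
          (Nat.div_mod_unique hN).mpr ⟨by generalize N * (M - 1) = c at h ⊢; omega, hJN⟩
        have hMm : M = m := by have h1 := huniq.1; omega
        have hJj : sInf S = j := by have h2 := huniq.2; omega
        intro i
        simp only [hA]
        split_ifs with h1 h2
        · -- i < j : show σ i ω ∈ Set.Ioi m
          have hle : M ≤ σ i ω := Finset.inf'_le _ (Finset.mem_univ i)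
          have hne : σ i ω ≠ M := by
            intro hEq
            have hiS : (i : ℕ) ∈ S := ⟨i.isLt, by rw [Fin.eta]; exact hEq⟩
            have := Nat.sInf_le hiS
            omega
          simp only [Set.mem_Ioi]
          omega
        · -- i = j : show σ i ω ∈ {m}
          have hieq : i = ⟨sInf S, hJN⟩ := Fin.ext (by simp [h2, hJj])
          simp only [Set.mem_singleton_iff, hieq, hJval, hMm]
        · -- j < i
          have hle : M ≤ σ i ω := Finset.inf'_le _ (Finset.mem_univ i)
          simp only [Set.mem_Ici]
          omega
      · intro h
        have hjm : σ ⟨j, hjN⟩ ω = m := by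
          have := h ⟨j, hjN⟩
          simp only [hA, lt_irrefl, if_false, if_pos] at this
          simpa using this
        have hMle : M ≤ m := hjm ▸ Finset.inf'_le _ (Finset.mem_univ (⟨j, hjN⟩ : Fin N))
        have hMge : m ≤ M := by
          apply Finset.le_inf'
          intro i _
          have hi := h i
          simp only [hA] at hi
          split_ifs at hi with h1 h2
          · simp only [Set.mem_Ioi] at hi; omega
          · simp only [Set.mem_singleton_iff] at hi; omega
          · simpa using hi
        have hMm : M = m := le_antisymm hMle hMge
        have hjS : j ∈ S := ⟨hjN, by rw [hjm, hMm]⟩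
        have hJle : sInf S ≤ j := Nat.sInf_le hjS
        have hJj : sInf S = j := by
          by_contra hne
          have hlt : sInf S < j := by omega
          obtain ⟨hJN, hJval⟩ := Nat.sInf_mem (⟨j, hjS⟩ : S.Nonempty)
          have := h ⟨sInf S, hJN⟩
          simp only [hA, hlt, if_pos, Set.mem_Ioi] at this
          omega
        rw [hMm, hJj]
        exact hk'
    rw [hsetEq, hindep.meas_iInter (fun i => ⟨A i, trivial, rfl⟩), hgeom 0 k hk1]
    have hfac : ∀ i : Fin N, P (σ i ⁻¹' A i)
        = ENNReal.ofReal (p ^ (if (i : ℕ) = j then 1 else 0)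
            * q ^ ((m - 1) + if (i : ℕ) < j then 1 else 0)) := by
      intro i
      have htail := geom_tail P p hp0 hp1 (σ i) (hmeas i) (hgeom i)
      rcases lt_trichotomy (i : ℕ) j with hij | hij | hij
      · have h1 : σ i ⁻¹' A i = {ω | m + 1 ≤ σ i ω} := by
          simp only [hA, if_pos hij]
          ext ω
          simp only [Set.mem_preimage, Set.mem_Ioi, Set.mem_setOf_eq]
          omega
        rw [h1, htail (m + 1) (by omega), show m + 1 - 1 = m - 1 + 1 from by omega]
        rw [if_neg (by omega), if_pos hij, pow_zero, one_mul]
      · have h1 : σ i ⁻¹' A i = {ω | σ i ω = m} := by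
          simp only [hA, if_neg (by omega : ¬ (i : ℕ) < j), if_pos hij]
          rfl
        rw [h1, hgeom i m hm1]
        rw [if_pos hij, if_neg (by omega), pow_one, add_zero]
      · have h1 : σ i ⁻¹' A i = {ω | m ≤ σ i ω} := by
          simp only [hA, if_neg (by omega : ¬ (i : ℕ) < j), if_neg (by omega : ¬ (i : ℕ) = j)]
          rfl
        rw [h1, htail m hm1]
        rw [if_neg (by omega), if_neg (by omega), pow_zero, one_mul, add_zero]
    rw [Finset.prod_congr rfl (fun i _ => hfac i),
      ← ENNReal.ofReal_prod_of_nonneg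
        (fun i _ => mul_nonneg (pow_nonneg hp0.le _) (pow_nonneg hq0 _))]
    congr 1
    rw [Finset.prod_mul_distrib, Finset.prod_pow_eq_pow_sum, Finset.prod_pow_eq_pow_sum]
    have hsa : (∑ i : Fin N, if (i : ℕ) = j then 1 else 0) = 1 := by
      rw [Fin.sum_univ_eq_sum_range (fun i => if i = j then 1 else 0)]
      rw [Finset.sum_ite_eq' (Finset.range N) j (fun _ => 1)]
      simp [Finset.mem_range, hjN]
    have hsum2 : (∑ i ∈ Finset.range N, if i < j then 1 else 0) = j := by
      rw [← Finset.sum_subset (Finset.range_subset_range.mpr hjN.le) (fun x hx hxn => by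
        simp only [Finset.mem_range] at hx hxn
        rw [if_neg]; omega)]
      rw [Finset.sum_congr rfl (fun x hx => by
        simp only [Finset.mem_range] at hx
        rw [if_pos hx])]
      simp
    have hse : (∑ i : Fin N, ((m - 1) + if (i : ℕ) < j then 1 else 0)) = k - 1 := by
      rw [Finset.sum_add_distrib, Finset.sum_const, Finset.card_univ, Fintype.card_fin,
        smul_eq_mul]
      rw [Fin.sum_univ_eq_sum_range (fun i => if i < j then 1 else 0), hsum2]
      exact hkey
    rw [hsa, hse, pow_one]
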